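/- The algebra of gl(1|1)-module endomorphisms of V^{⊗k} has dimension (2(k−1) choose k−1), and is isomorphic as a ℂ-algebra to the planar rook algebra ℂP_{k-1}, which is the direct sum over ℓ = 0,...,k−1 of full matrix algebras of size (k−1 choose ℓ). -/

import Mathlib

noncomputable section

/-- `V^{⊗k}` for the two-dimensional module `V = ℂx ⊕ ℂy`, realized as functions on
words `w : Fin k → Bool` (`false` = `x` (even), `true` = `y` (odd)). -/
abbrev TensorV (k : ℕ) : Type := (Fin k → Bool) → ℂ

/-- The sign `(-1)^{#odd factors strictly before position i}` in the graded Leibniz rule. -/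
def glSgn {k : ℕ} (w : Fin k → Bool) (i : Fin k) : ℂ :=
  (-1 : ℂ) ^ (Finset.univ.filter (fun j => j < i ∧ w j = true)).card

/-- The action of `e ∈ gl(1|1)` on `V^{⊗k}` (graded Leibniz rule, `e·y = x`, `e·x = 0`). -/
def Eop (k : ℕ) : TensorV k →ₗ[ℂ] TensorV k :=
  LinearMap.pi fun w =>
    ∑ i ∈ Finset.univ.filter (fun i => w i = false),
      glSgn w i • LinearMap.proj (R := ℂ) (φ := fun _ => ℂ) (Function.update w i true)

/-- The action of `f ∈ gl(1|1)` on `V^{⊗k}` (graded Leibniz rule, `f·x = y`, `f·y = 0`). -/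
def Fop (k : ℕ) : TensorV k →ₗ[ℂ] TensorV k :=
  LinearMap.pi fun w =>
    ∑ i ∈ Finset.univ.filter (fun i => w i = true),
      glSgn w i • LinearMap.proj (R := ℂ) (φ := fun _ => ℂ) (Function.update w i false)

/-- The action of `h₁ ∈ gl(1|1)` on `V^{⊗k}`: a word is scaled by its number of `x`'s. -/
def H1op (k : ℕ) : TensorV k →ₗ[ℂ] TensorV k :=
  LinearMap.pi fun w =>
    ((Finset.univ.filter (fun i => w i = false)).card : ℂ) •
      LinearMap.proj (R := ℂ) (φ := fun _ => ℂ) w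

/-- The action of `h₂ ∈ gl(1|1)` on `V^{⊗k}`: a word is scaled by its number of `y`'s. -/
def H2op (k : ℕ) : TensorV k →ₗ[ℂ] TensorV k :=
  LinearMap.pi fun w =>
    ((Finset.univ.filter (fun i => w i = true)).card : ℂ) •
      LinearMap.proj (R := ℂ) (φ := fun _ => ℂ) w

/-- The standard basis vector of `V^{⊗k}` indexed by the word `w`. -/
def bv {k : ℕ} (w : Fin k → Bool) : TensorV k := fun w' => if w' = w then 1 else 0

/-- The word of `y ⊗ u_s ∈ V^{⊗(n+1)}`, where `u_s = u₁⊗⋯⊗u_n` has `u_i = x`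
iff `i ∈ s`. -/
def wordOf {n : ℕ} (s : Finset (Fin n)) : Fin (n + 1) → Bool :=
  Fin.cons true (fun j => if j ∈ s then false else true)

/-- The highest weight vector `v_s = e · (y ⊗ u_s) ∈ V^{⊗(n+1)}`. -/
def vStd {n : ℕ} (s : Finset (Fin n)) : TensorV (n + 1) := Eop (n + 1) (bv (wordOf s))

end

/-- The algebra of `gl(1|1)`-endomorphisms of `V^{⊗k}` (`k = n+1`), i.e. the
centralizer of the operators `e, f, h₁, h₂` in `End(V^{⊗k})`. -/
noncomputable def glCentralizer (n : ℕ) : Subalgebra ℂ (Module.End ℂ (TensorV (n + 1))) :=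
  Subalgebra.centralizer ℂ
    {Eop (n + 1), Fop (n + 1), H1op (n + 1), H2op (n + 1)}


namespace GlAux

open Finset Function

variable {k : ℕ}

lemma Eop_apply (φ : TensorV k) (w : Fin k → Bool) :
    Eop k φ w = ∑ i ∈ Finset.univ.filter (fun i => w i = false),
      glSgn w i * φ (Function.update w i true) := by
  simp [Eop, LinearMap.pi_apply, LinearMap.sum_apply, LinearMap.smul_apply,
    LinearMap.proj_apply, smul_eq_mul]

lemma Fop_apply (φ : TensorV k) (w : Fin k → Bool) :
    Fop k φ w = ∑ i ∈ Finset.univ.filter (fun i => w i = true),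
      glSgn w i * φ (Function.update w i false) := by
  simp [Fop, LinearMap.pi_apply, LinearMap.sum_apply, LinearMap.smul_apply,
    LinearMap.proj_apply, smul_eq_mul]

lemma H1op_apply (φ : TensorV k) (w : Fin k → Bool) :
    H1op k φ w = ((Finset.univ.filter (fun i => w i = false)).card : ℂ) * φ w := by
  simp [H1op, LinearMap.pi_apply, smul_eq_mul]

lemma H2op_apply (φ : TensorV k) (w : Fin k → Bool) :
    H2op k φ w = ((Finset.univ.filter (fun i => w i = true)).card : ℂ) * φ w := by
  simp [H2op, LinearMap.pi_apply, smul_eq_mul]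

lemma glSgn_mul_self (w : Fin k → Bool) (i : Fin k) : glSgn w i * glSgn w i = 1 := by
  rw [glSgn, ← pow_add]
  exact Even.neg_one_pow ⟨_, rfl⟩

lemma glSgn_update_self (w : Fin k → Bool) (i : Fin k) (b : Bool) :
    glSgn (Function.update w i b) i = glSgn w i := by
  unfold glSgn
  congr 1
  apply congrArg Finset.card
  apply Finset.filter_congr
  intro j _
  have : ∀ (hj : j < i), Function.update w i b j = w j := fun hj =>
    Function.update_of_ne (ne_of_lt hj) _ _
  constructor <;> rintro ⟨h1, h2⟩ <;> exact ⟨h1, by rw [this h1] at *; assumption⟩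

lemma glSgn_update_of_not_lt (w : Fin k → Bool) {i j : Fin k} (h : ¬ i < j) (b : Bool) :
    glSgn (Function.update w i b) j = glSgn w j := by
  unfold glSgn
  congr 1
  apply congrArg Finset.card
  apply Finset.filter_congr
  intro x _
  have : ∀ (hx : x < j), Function.update w i b x = w x := fun hx =>
    Function.update_of_ne (by rintro rfl; exact h hx) _ _
  constructor <;> rintro ⟨h1, h2⟩ <;> exact ⟨h1, by rw [this h1] at *; assumption⟩

lemma glSgn_update_true_of_lt (w : Fin k → Bool) {i j : Fin k} (h : i < j) (hw : w i = false) :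
    glSgn (Function.update w i true) j = - glSgn w j := by
  unfold glSgn
  have hset : Finset.univ.filter (fun x => x < j ∧ Function.update w i true x = true)
      = insert i (Finset.univ.filter (fun x => x < j ∧ w x = true)) := by
    ext x
    by_cases hx : x = i
    · subst hx
      simp [h, hw]
    · simp [Function.update_of_ne hx, hx]
  rw [hset, Finset.card_insert_of_notMem (by simp [hw]), pow_succ]
  ring

lemma glSgn_update_false_of_lt (w : Fin k → Bool) {i j : Fin k} (h : i < j) (hw : w i = true) :
    glSgn (Function.update w i false) j = - glSgn w j := by
  unfold glSgn
  have hset : Finset.univ.filter (fun x => x < j ∧ w x = true)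
      = insert i (Finset.univ.filter (fun x => x < j ∧ Function.update w i false x = true)) := by
    ext x
    by_cases hx : x = i
    · subst hx
      simp [h, hw]
    · simp [Function.update_of_ne hx, hx]
  rw [hset, Finset.card_insert_of_notMem (by simp), pow_succ]
  ring

lemma filter_false_update_true (w : Fin k → Bool) {i : Fin k} (h : w i = false) :
    Finset.univ.filter (fun x => Function.update w i true x = false)
      = (Finset.univ.filter (fun x => w x = false)).erase i := by
  ext x
  by_cases hx : x = i
  · subst hx; simp
  · simp [Function.update_of_ne hx, hx]

lemma filter_true_update_true (w : Fin k → Bool) {i : Fin k} (h : w i = false) :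
    Finset.univ.filter (fun x => Function.update w i true x = true)
      = insert i (Finset.univ.filter (fun x => w x = true)) := by
  ext x
  by_cases hx : x = i
  · subst hx; simp
  · simp [Function.update_of_ne hx, hx]

lemma filter_true_update_false (w : Fin k → Bool) {i : Fin k} (h : w i = true) :
    Finset.univ.filter (fun x => Function.update w i false x = true)
      = (Finset.univ.filter (fun x => w x = true)).erase i := by
  ext x
  by_cases hx : x = i
  · subst hx; simp
  · simp [Function.update_of_ne hx, hx]

lemma filter_false_update_false (w : Fin k → Bool) {i : Fin k} (h : w i = true) :
    Finset.univ.filter (fun x => Function.update w i false x = false)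
      = insert i (Finset.univ.filter (fun x => w x = false)) := by
  ext x
  by_cases hx : x = i
  · subst hx; simp
  · simp [Function.update_of_ne hx, hx]

lemma sum_erase_antisymm {α : Type*} [DecidableEq α] (F : Finset α) (f : α → α → ℂ)
    (h : ∀ i ∈ F, ∀ j ∈ F, i ≠ j → f i j = - f j i) :
    ∑ i ∈ F, ∑ j ∈ F.erase i, f i j = 0 := by
  have hcomm : ∑ i ∈ F, ∑ j ∈ F.erase i, f i j = ∑ j ∈ F, ∑ i ∈ F.erase j, f i j :=
    Finset.sum_comm' (by
      intro x y
      simp only [Finset.mem_erase]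
      tauto)
  have : ∑ i ∈ F, ∑ j ∈ F.erase i, f i j = - ∑ i ∈ F, ∑ j ∈ F.erase i, f i j := by
    nth_rewrite 1 [hcomm]
    rw [← Finset.sum_neg_distrib]
    apply Finset.sum_congr rfl
    intro j hj
    rw [← Finset.sum_neg_distrib]
    apply Finset.sum_congr rfl
    intro i hi
    rw [h i (Finset.mem_of_mem_erase hi) j hj (Finset.ne_of_mem_erase hi)]
  have h2 : (2 : ℂ) * (∑ i ∈ F, ∑ j ∈ F.erase i, f i j) = 0 := by linear_combination this
  simpa using h2

end GlAux

namespace GlAux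

open Finset Function

variable {k : ℕ}

lemma card_filter_add (w : Fin k → Bool) :
    (Finset.univ.filter (fun i => w i = false)).card
      + (Finset.univ.filter (fun i => w i = true)).card = k := by
  classical
  have h0 := Finset.card_filter_add_card_filter_not
    (s := (Finset.univ : Finset (Fin k))) (p := fun i => w i = false)
  have h1 : Finset.univ.filter (fun i => ¬ w i = false)
      = Finset.univ.filter (fun i => w i = true) := by
    apply Finset.filter_congr
    intro x _
    simp
  rw [h1] at h0
  simpa using h0

lemma Eop_Eop (φ : TensorV k) : Eop k (Eop k φ) = 0 := by
  funext w
  rw [Eop_apply]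
  simp only [Pi.zero_apply]
  have key : ∀ i ∈ Finset.univ.filter (fun i => w i = false),
      glSgn w i * (Eop k φ) (Function.update w i true)
        = ∑ j ∈ (Finset.univ.filter (fun x => w x = false)).erase i,
            glSgn w i * (glSgn (Function.update w i true) j
              * φ (Function.update (Function.update w i true) j true)) := by
    intro i hi
    rw [Eop_apply, filter_false_update_true w (by simpa using hi), Finset.mul_sum]
  rw [Finset.sum_congr rfl key]
  apply sum_erase_antisymm
  intro i hi j hj hij
  simp only [Finset.mem_filter] at hi hj
  rcases lt_or_gt_of_ne hij with hlt | hgt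
  · rw [glSgn_update_true_of_lt w hlt hi.2, glSgn_update_of_not_lt w (not_lt.2 hlt.le) true,
      Function.update_comm hij]
    ring
  · rw [glSgn_update_of_not_lt w (not_lt.2 hgt.le) true, glSgn_update_true_of_lt w hgt hj.2,
      Function.update_comm hij]
    ring

lemma Fop_Fop (φ : TensorV k) : Fop k (Fop k φ) = 0 := by
  funext w
  rw [Fop_apply]
  simp only [Pi.zero_apply]
  have key : ∀ i ∈ Finset.univ.filter (fun i => w i = true),
      glSgn w i * (Fop k φ) (Function.update w i false)
        = ∑ j ∈ (Finset.univ.filter (fun x => w x = true)).erase i,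
            glSgn w i * (glSgn (Function.update w i false) j
              * φ (Function.update (Function.update w i false) j false)) := by
    intro i hi
    rw [Fop_apply, filter_true_update_false w (by simpa using hi), Finset.mul_sum]
  rw [Finset.sum_congr rfl key]
  apply sum_erase_antisymm
  intro i hi j hj hij
  simp only [Finset.mem_filter] at hi hj
  rcases lt_or_gt_of_ne hij with hlt | hgt
  · rw [glSgn_update_false_of_lt w hlt hi.2, glSgn_update_of_not_lt w (not_lt.2 hlt.le) false,
      Function.update_comm hij]
    ring
  · rw [glSgn_update_of_not_lt w (not_lt.2 hgt.le) false, glSgn_update_false_of_lt w hgt hj.2,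
      Function.update_comm hij]
    ring

lemma EF_add_FE (φ : TensorV k) :
    Eop k (Fop k φ) + Fop k (Eop k φ) = (k : ℂ) • φ := by
  funext w
  simp only [Pi.add_apply, Pi.smul_apply, smul_eq_mul]
  rw [Eop_apply, Fop_apply]
  have hEF : ∀ i ∈ Finset.univ.filter (fun i => w i = false),
      glSgn w i * (Fop k φ) (Function.update w i true)
        = φ w + ∑ j ∈ Finset.univ.filter (fun x => w x = true),
            glSgn w i * (glSgn (Function.update w i true) j
              * φ (Function.update (Function.update w i true) j false)) := by
    intro i hi
    have hwi : w i = false := by simpa using hi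
    rw [Fop_apply, filter_true_update_true w hwi,
      Finset.sum_insert (by simp [hwi]), mul_add, Finset.mul_sum]
    congr 1
    rw [glSgn_update_self, Function.update_idem,
      Function.update_eq_self_iff.2 hwi.symm, ← mul_assoc, glSgn_mul_self, one_mul]
  have hFE : ∀ j ∈ Finset.univ.filter (fun i => w i = true),
      glSgn w j * (Eop k φ) (Function.update w j false)
        = φ w + ∑ i ∈ Finset.univ.filter (fun x => w x = false),
            glSgn w j * (glSgn (Function.update w j false) i
              * φ (Function.update (Function.update w j false) i true)) := by
    intro j hj
    have hwj : w j = true := by simpa using hj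
    rw [Eop_apply, filter_false_update_false w hwj,
      Finset.sum_insert (by simp [hwj]), mul_add, Finset.mul_sum]
    congr 1
    rw [glSgn_update_self, Function.update_idem,
      Function.update_eq_self_iff.2 hwj.symm, ← mul_assoc, glSgn_mul_self, one_mul]
  rw [Finset.sum_congr rfl hEF, Finset.sum_congr rfl hFE, Finset.sum_add_distrib,
    Finset.sum_add_distrib, Finset.sum_const, Finset.sum_const]
  have hcancel : (∑ i ∈ Finset.univ.filter (fun i => w i = false),
        ∑ j ∈ Finset.univ.filter (fun x => w x = true),
          glSgn w i * (glSgn (Function.update w i true) j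
            * φ (Function.update (Function.update w i true) j false)))
      + ∑ j ∈ Finset.univ.filter (fun i => w i = true),
          ∑ i ∈ Finset.univ.filter (fun x => w x = false),
            glSgn w j * (glSgn (Function.update w j false) i
              * φ (Function.update (Function.update w j false) i true)) = 0 := by
    rw [Finset.sum_comm (s := Finset.univ.filter (fun i => w i = true))
      (t := Finset.univ.filter (fun x => w x = false)), ← Finset.sum_add_distrib]
    apply Finset.sum_eq_zero
    intro i hi
    rw [← Finset.sum_add_distrib]
    apply Finset.sum_eq_zero
    intro j hj
    have hwi : w i = false := by simpa using hi
    have hwj : w j = true := by simpa using hj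
    have hij : i ≠ j := by rintro rfl; rw [hwi] at hwj; exact Bool.noConfusion hwj
    have harg : Function.update (Function.update w i true) j false
        = Function.update (Function.update w j false) i true := Function.update_comm hij _ _ _
    rw [harg]
    rcases lt_or_gt_of_ne hij with hlt | hgt
    · rw [glSgn_update_true_of_lt w hlt hwi, glSgn_update_of_not_lt w (not_lt.2 hlt.le) false]
      ring
    · rw [glSgn_update_of_not_lt w (not_lt.2 hgt.le) true, glSgn_update_false_of_lt w hgt hwj]
      ring
  have hcard : ((Finset.univ.filter (fun i => w i = false)).card : ℂ)
      + (Finset.univ.filter (fun i => w i = true)).card = k := by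
    exact_mod_cast congrArg (Nat.cast : ℕ → ℂ) (card_filter_add w)
  rw [nsmul_eq_mul, nsmul_eq_mul]
  linear_combination hcancel + φ w * hcard

lemma H1_Eop (φ : TensorV k) :
    H1op k (Eop k φ) = Eop k (H1op k φ) + Eop k φ := by
  funext w
  simp only [Pi.add_apply, H1op_apply, Eop_apply]
  rw [Finset.mul_sum, ← Finset.sum_add_distrib]
  apply Finset.sum_congr rfl
  intro i hi
  have hwi : w i = false := by simpa using hi
  rw [filter_false_update_true w hwi, Finset.card_erase_of_mem (by simp [hwi])]
  have hpos : 0 < (Finset.univ.filter (fun x => w x = false)).card :=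
    Finset.card_pos.2 ⟨i, by simp [hwi]⟩
  rw [Nat.cast_sub hpos]
  push_cast
  ring

lemma H1_Fop (φ : TensorV k) :
    H1op k (Fop k φ) = Fop k (H1op k φ) - Fop k φ := by
  funext w
  simp only [Pi.sub_apply, H1op_apply, Fop_apply]
  rw [Finset.mul_sum, ← Finset.sum_sub_distrib]
  apply Finset.sum_congr rfl
  intro i hi
  have hwi : w i = true := by simpa using hi
  rw [filter_false_update_false w hwi, Finset.card_insert_of_notMem (by simp [hwi])]
  push_cast
  ring

lemma H1_add_H2 (φ : TensorV k) :
    H1op k φ + H2op k φ = (k : ℂ) • φ := by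
  funext w
  simp only [Pi.add_apply, Pi.smul_apply, smul_eq_mul]
  rw [H1op_apply, H2op_apply]
  have hcard : ((Finset.univ.filter (fun i => w i = false)).card : ℂ)
      + (Finset.univ.filter (fun i => w i = true)).card = k := by
    exact_mod_cast congrArg (Nat.cast : ℕ → ℂ) (card_filter_add w)
  linear_combination φ w * hcard

end GlAux

namespace GlAux

open Finset Function

variable {n : ℕ}

lemma filter_wordOf_false (s : Finset (Fin n)) :
    Finset.univ.filter (fun i => wordOf s i = false)
      = s.map ⟨Fin.succ, Fin.succ_injective n⟩ := by
  ext i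
  refine Fin.cases ?_ ?_ i
  · simp only [Finset.mem_filter, Finset.mem_univ, true_and, Finset.mem_map,
      Function.Embedding.coeFn_mk]
    constructor
    · intro h; exact absurd h (by simp [wordOf])
    · rintro ⟨j, _, hj⟩; exact absurd hj (Fin.succ_ne_zero j)
  · intro j
    simp only [Finset.mem_filter, Finset.mem_univ, true_and, Finset.mem_map,
      Function.Embedding.coeFn_mk, wordOf, Fin.cons_succ]
    by_cases hj : j ∈ s
    · simp [hj, Fin.succ_inj]
    · erw [Finset.mem_filter]
      simp only [Finset.mem_univ, true_and, Fin.cons_succ, hj, if_false]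
      constructor
      · intro h; exact absurd h (by simp)
      · rintro ⟨j', hj', hjj⟩
        rw [Fin.succ_inj] at hjj
        subst hjj
        exact absurd hj' hj

lemma card_filter_wordOf (s : Finset (Fin n)) :
    (Finset.univ.filter (fun i => wordOf s i = false)).card = s.card := by
  rw [filter_wordOf_false, Finset.card_map]

lemma H1op_bv (s : Finset (Fin n)) :
    H1op (n + 1) (bv (wordOf s)) = (s.card : ℂ) • bv (wordOf s) := by
  funext w
  simp only [Pi.smul_apply, smul_eq_mul, H1op_apply]
  by_cases h : w = wordOf s
  · subst h
    rw [card_filter_wordOf]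
  · simp [bv, h]

lemma Eop_vStd (s : Finset (Fin n)) : Eop (n + 1) (vStd s) = 0 := Eop_Eop _

lemma FopFop_vStd (s : Finset (Fin n)) :
    Fop (n + 1) (Fop (n + 1) (vStd s)) = 0 := Fop_Fop _

lemma EopFop_vStd (s : Finset (Fin n)) :
    Eop (n + 1) (Fop (n + 1) (vStd s)) = (((n : ℂ) + 1)) • vStd s := by
  have h := EF_add_FE (k := n + 1) (vStd s)
  rw [Eop_vStd, map_zero, add_zero] at h
  rw [h]
  norm_num

lemma H1_vStd (s : Finset (Fin n)) :
    H1op (n + 1) (vStd s) = ((s.card : ℂ) + 1) • vStd s := by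
  unfold vStd
  rw [H1_Eop, H1op_bv, map_smul, add_smul, one_smul]

lemma H1_Fop_vStd (s : Finset (Fin n)) :
    H1op (n + 1) (Fop (n + 1) (vStd s)) = (s.card : ℂ) • Fop (n + 1) (vStd s) := by
  rw [H1_Fop, H1_vStd, map_smul]
  rw [add_smul, one_smul]
  abel

lemma H2_vStd (s : Finset (Fin n)) :
    H2op (n + 1) (vStd s) = ((n : ℂ) - s.card) • vStd s := by
  have h := H1_add_H2 (k := n + 1) (vStd s)
  have h2 : H2op (n + 1) (vStd s) = (((n : ℕ) + 1 : ℕ) : ℂ) • vStd s - H1op (n + 1) (vStd s) :=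
    eq_sub_of_add_eq' h
  rw [h2, H1_vStd, ← sub_smul]
  congr 1
  push_cast
  ring

lemma H2_Fop_vStd (s : Finset (Fin n)) :
    H2op (n + 1) (Fop (n + 1) (vStd s))
      = ((n : ℂ) + 1 - s.card) • Fop (n + 1) (vStd s) := by
  have h := H1_add_H2 (k := n + 1) (Fop (n + 1) (vStd s))
  have h2 : H2op (n + 1) (Fop (n + 1) (vStd s))
      = (((n : ℕ) + 1 : ℕ) : ℂ) • Fop (n + 1) (vStd s)
        - H1op (n + 1) (Fop (n + 1) (vStd s)) :=
    eq_sub_of_add_eq' h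
  rw [h2, H1_Fop_vStd, ← sub_smul]
  congr 1
  push_cast
  ring

def lowOf {n : ℕ} (s : Finset (Fin n)) : Fin (n + 1) → Bool :=
  Fin.cons false (fun j => if j ∈ s then false else true)

lemma update_lowOf_zero (t : Finset (Fin n)) :
    Function.update (lowOf t) 0 true = wordOf t := by
  unfold lowOf wordOf
  exact Fin.update_cons_zero _ _ _

lemma wordOf_inj {s t : Finset (Fin n)} (h : wordOf s = wordOf t) : s = t := by
  ext j
  have := congrFun h j.succ
  simp only [wordOf, Fin.cons_succ] at this
  by_cases hs : j ∈ s <;> by_cases ht : j ∈ t <;> simp [hs, ht] at this ⊢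

lemma vStd_eval (s t : Finset (Fin n)) : vStd s (lowOf t) = if s = t then 1 else 0 := by
  unfold vStd
  rw [Eop_apply]
  have h0mem : (0 : Fin (n + 1)) ∈ Finset.univ.filter (fun i => lowOf t i = false) := by
    simp [lowOf]
  rw [Finset.sum_eq_single_of_mem (0 : Fin (n + 1)) h0mem ?_]
  · rw [update_lowOf_zero]
    have hsgn : glSgn (lowOf t) 0 = 1 := by
      unfold glSgn
      rw [Finset.filter_false_of_mem, Finset.card_empty, pow_zero]
      intro x _
      simp [Fin.not_lt_zero]
    rw [hsgn, one_mul]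
    unfold bv
    by_cases hst : s = t
    · subst hst; simp
    · rw [if_neg (fun hc => hst (wordOf_inj hc).symm), if_neg hst]
  · intro i _ hi
    have : Function.update (lowOf t) i true ≠ wordOf s := by
      intro hc
      have h0 := congrFun hc 0
      rw [Function.update_of_ne (Ne.symm hi)] at h0
      simp [lowOf, wordOf] at h0
    rw [bv, if_neg this, mul_zero]

end GlAux

namespace GlAux

open Finset Function Module

variable (n : ℕ)

abbrev Idx (n : ℕ) := Σ ℓ : Fin (n + 1), Fin (n.choose ℓ.1)

abbrev BIdx (n : ℕ) := Bool × Idx n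

abbrev UU (n : ℕ) := BIdx n → ℂ

lemma card_subC (ℓ : ℕ) :
    Fintype.card {s : Finset (Fin n) // s.card = ℓ} = n.choose ℓ := by
  rw [Fintype.card_subtype]
  have h : Finset.univ.filter (fun s : Finset (Fin n) => s.card = ℓ)
      = Finset.powersetCard ℓ Finset.univ := by
    ext s
    simp [Finset.mem_powersetCard_univ]
  rw [h, Finset.card_powersetCard, Finset.card_univ, Fintype.card_fin]

noncomputable def subEquiv (ℓ : ℕ) :
    {s : Finset (Fin n) // s.card = ℓ} ≃ Fin (n.choose ℓ) :=
  Fintype.equivFinOfCardEq (card_subC n ℓ)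

noncomputable def idx (p : Idx n) : Finset (Fin n) := ((subEquiv n p.1.1).symm p.2).1

lemma card_idx (p : Idx n) : (idx n p).card = p.1.1 := ((subEquiv n p.1.1).symm p.2).2

lemma idx_inj : Function.Injective (idx n) := by
  rintro ⟨ℓ, j⟩ ⟨ℓ', j'⟩ h
  have hc : (ℓ : Fin (n+1)).1 = ℓ'.1 := by
    rw [← card_idx n ⟨ℓ, j⟩, ← card_idx n ⟨ℓ', j'⟩, h]
  have hℓ : ℓ = ℓ' := Fin.ext hc
  subst hℓ
  have h2 : (subEquiv n ℓ.1).symm j = (subEquiv n ℓ.1).symm j' := Subtype.ext h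
  have h3 : j = j' := (subEquiv n ℓ.1).symm.injective h2
  subst h3
  rfl

noncomputable def vBas (q : BIdx n) : TensorV (n + 1) :=
  if q.1 = false then vStd (idx n q.2) else Fop (n + 1) (vStd (idx n q.2))

noncomputable def Psi : UU n →ₗ[ℂ] TensorV (n + 1) :=
  Fintype.linearCombination ℂ (vBas n)

lemma Psi_split (u : UU n) :
    Psi n u = (∑ p : Idx n, u (false, p) • vStd (idx n p))
      + ∑ p : Idx n, u (true, p) • Fop (n + 1) (vStd (idx n p)) := by
  rw [Psi, Fintype.linearCombination_apply, Fintype.sum_prod_type, Fintype.sum_bool]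
  have hA : ∑ p : Idx n, u (true, p) • vBas n (true, p)
      = ∑ p : Idx n, u (true, p) • Fop (n + 1) (vStd (idx n p)) :=
    Finset.sum_congr rfl (fun p _ => by simp [vBas])
  have hB : ∑ p : Idx n, u (false, p) • vBas n (false, p)
      = ∑ p : Idx n, u (false, p) • vStd (idx n p) :=
    Finset.sum_congr rfl (fun p _ => by simp [vBas])
  rw [hA, hB]
  exact add_comm _ _

lemma sum_smul_vStd_eval (x : Idx n → ℂ) (q : Idx n) :
    (∑ p : Idx n, x p • vStd (idx n p)) (lowOf (idx n q)) = x q := by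
  rw [Finset.sum_apply]
  have h : ∀ p : Idx n, (x p • vStd (idx n p)) (lowOf (idx n q))
      = if p = q then x p else 0 := by
    intro p
    rw [Pi.smul_apply, smul_eq_mul, vStd_eval]
    by_cases hpq : p = q
    · subst hpq; simp
    · rw [if_neg (fun hc => hpq (idx_inj n hc)), if_neg hpq, mul_zero]
  rw [Finset.sum_congr rfl (fun p _ => h p), Finset.sum_ite_eq' Finset.univ q x,
    if_pos (Finset.mem_univ q)]

lemma Psi_inj : Function.Injective (Psi n) := by
  rw [injective_iff_map_eq_zero]
  intro u hu
  have hut : ∀ q : Idx n, u (true, q) = 0 := by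
    intro q
    have h0 := congrArg (Eop (n + 1)) hu
    rw [Psi_split, map_add, map_sum, map_sum, map_zero] at h0
    simp only [map_smul, Eop_vStd, EopFop_vStd, smul_zero, Finset.sum_const_zero,
      zero_add] at h0
    have h1 : ∀ p : Idx n, u (true, p) • (((n : ℂ) + 1) • vStd (idx n p))
        = (((n : ℂ) + 1) * u (true, p)) • vStd (idx n p) := by
      intro p
      rw [smul_smul, mul_comm]
    rw [Finset.sum_congr rfl (fun p _ => h1 p)] at h0
    have h2 := congrFun h0 (lowOf (idx n q))
    rw [sum_smul_vStd_eval] at h2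
    have hne : ((n : ℂ) + 1) ≠ 0 := Nat.cast_add_one_ne_zero n
    simp only [Pi.zero_apply] at h2
    exact (mul_eq_zero.1 h2).resolve_left hne
  have huf : ∀ q : Idx n, u (false, q) = 0 := by
    intro q
    rw [Psi_split] at hu
    have hz : ∀ p : Idx n, u (true, p) • Fop (n + 1) (vStd (idx n p)) = 0 := by
      intro p
      rw [hut p, zero_smul]
    rw [Finset.sum_congr rfl (fun p _ => hz p), Finset.sum_const_zero, add_zero] at hu
    have h2 := congrFun hu (lowOf (idx n q))
    rw [sum_smul_vStd_eval] at h2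
    simpa using h2
  funext q
  obtain ⟨c, p⟩ := q
  cases c
  · exact huf p
  · exact hut p

lemma card_Idx : Fintype.card (Idx n) = 2 ^ n := by
  rw [Fintype.card_sigma]
  simp only [Fintype.card_fin]
  rw [Fin.sum_univ_eq_sum_range (fun ℓ => n.choose ℓ) (n + 1)]
  exact Nat.sum_range_choose n

lemma finrank_UU_eq : finrank ℂ (UU n) = finrank ℂ (TensorV (n + 1)) := by
  rw [Module.finrank_pi ℂ, Module.finrank_pi ℂ]
  rw [Fintype.card_prod, card_Idx, Fintype.card_bool]
  rw [Fintype.card_fun, Fintype.card_bool, Fintype.card_fin]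
  ring

noncomputable def Phi : UU n ≃ₗ[ℂ] TensorV (n + 1) :=
  LinearEquiv.ofBijective (Psi n)
    ⟨Psi_inj n, (LinearMap.injective_iff_surjective_of_finrank_eq_finrank
      (finrank_UU_eq n)).1 (Psi_inj n)⟩

noncomputable def Etil : Module.End ℂ (UU n) :=
  LinearMap.pi fun q =>
    if q.1 = false then ((n : ℂ) + 1) • LinearMap.proj (R := ℂ) (φ := fun _ => ℂ) (true, q.2)
    else 0

noncomputable def Ftil : Module.End ℂ (UU n) :=
  LinearMap.pi fun q =>
    if q.1 = true then LinearMap.proj (R := ℂ) (φ := fun _ => ℂ) (false, q.2)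
    else 0

noncomputable def Dg (μ : BIdx n → ℂ) : Module.End ℂ (UU n) :=
  LinearMap.pi fun q => μ q • LinearMap.proj (R := ℂ) (φ := fun _ => ℂ) q

def muf (q : BIdx n) : ℂ := if q.1 = false then (q.2.1.1 : ℂ) + 1 else (q.2.1.1 : ℂ)

def nuf (q : BIdx n) : ℂ :=
  if q.1 = false then (n : ℂ) - q.2.1.1 else (n : ℂ) + 1 - q.2.1.1

lemma Etil_apply (u : UU n) (q : BIdx n) :
    Etil n u q = if q.1 = false then ((n : ℂ) + 1) * u (true, q.2) else 0 := by
  unfold Etil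
  rw [LinearMap.pi_apply]
  split_ifs with h
  · simp
  · simp

lemma Ftil_apply (u : UU n) (q : BIdx n) :
    Ftil n u q = if q.1 = true then u (false, q.2) else 0 := by
  unfold Ftil
  rw [LinearMap.pi_apply]
  split_ifs with h
  · simp
  · simp

lemma Dg_apply (μ : BIdx n → ℂ) (u : UU n) (q : BIdx n) :
    Dg n μ u q = μ q * u q := by
  unfold Dg
  rw [LinearMap.pi_apply]
  simp

lemma Eop_Psi (u : UU n) : Eop (n + 1) (Psi n u) = Psi n (Etil n u) := by
  rw [Psi_split, Psi_split, map_add, map_sum, map_sum]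
  simp only [map_smul, Eop_vStd, EopFop_vStd, smul_zero, Finset.sum_const_zero, zero_add]
  have h1 : ∀ p : Idx n, (Etil n u) (false, p) = ((n : ℂ) + 1) * u (true, p) := by
    intro p; rw [Etil_apply]; simp
  have h2 : ∀ p : Idx n, (Etil n u) (true, p) = 0 := by
    intro p; rw [Etil_apply]; simp
  simp only [h1, h2, zero_smul, Finset.sum_const_zero, add_zero]
  apply Finset.sum_congr rfl
  intro p _
  rw [smul_smul, mul_comm]

lemma Fop_Psi (u : UU n) : Fop (n + 1) (Psi n u) = Psi n (Ftil n u) := by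
  rw [Psi_split, Psi_split, map_add, map_sum, map_sum]
  simp only [map_smul, FopFop_vStd, smul_zero, Finset.sum_const_zero, add_zero]
  have h1 : ∀ p : Idx n, (Ftil n u) (false, p) = 0 := by
    intro p; rw [Ftil_apply]; simp
  have h2 : ∀ p : Idx n, (Ftil n u) (true, p) = u (false, p) := by
    intro p; rw [Ftil_apply]; simp
  simp only [h1, h2, zero_smul, Finset.sum_const_zero, zero_add]

lemma H1op_Psi (u : UU n) : H1op (n + 1) (Psi n u) = Psi n (Dg n (muf n) u) := by
  rw [Psi_split, Psi_split, map_add, map_sum, map_sum]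
  simp only [map_smul, H1_vStd, H1_Fop_vStd]
  congr 1
  · apply Finset.sum_congr rfl
    intro p _
    rw [Dg_apply, smul_smul]
    congr 1
    simp only [muf, card_idx n p]
    norm_num
    ring
  · apply Finset.sum_congr rfl
    intro p _
    rw [Dg_apply, smul_smul]
    congr 1
    simp only [muf, card_idx n p]
    norm_num
    ring

lemma H2op_Psi (u : UU n) : H2op (n + 1) (Psi n u) = Psi n (Dg n (nuf n) u) := by
  rw [Psi_split, Psi_split, map_add, map_sum, map_sum]
  simp only [map_smul, H2_vStd, H2_Fop_vStd]
  congr 1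
  · apply Finset.sum_congr rfl
    intro p _
    rw [Dg_apply, smul_smul]
    congr 1
    simp only [nuf, card_idx n p]
    norm_num
    ring
  · apply Finset.sum_congr rfl
    intro p _
    rw [Dg_apply, smul_smul]
    congr 1
    simp only [nuf, card_idx n p]
    norm_num
    ring

end GlAux

namespace GlAux

open Finset Function Module

variable (n : ℕ)

abbrev MatAlg (n : ℕ) :=
  (ℓ : Fin (n + 1)) → Matrix (Fin (n.choose ℓ.val)) (Fin (n.choose ℓ.val)) ℂ

noncomputable def ThetaFun (M : MatAlg n) : Module.End ℂ (UU n) :=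
  LinearMap.pi fun q =>
    ∑ j' : Fin (n.choose q.2.1.1),
      M q.2.1 q.2.2 j' • LinearMap.proj (R := ℂ) (φ := fun _ => ℂ) (q.1, ⟨q.2.1, j'⟩)

lemma ThetaFun_apply (M : MatAlg n) (u : UU n) (c : Bool) (ℓ : Fin (n + 1))
    (j : Fin (n.choose ℓ.1)) :
    ThetaFun n M u (c, ⟨ℓ, j⟩) = ∑ j' : Fin (n.choose ℓ.1), M ℓ j j' * u (c, ⟨ℓ, j'⟩) := by
  unfold ThetaFun
  rw [LinearMap.pi_apply]
  simp

lemma pair_eq_iff (c : Bool) (ℓ : Fin (n + 1)) (j j' : Fin (n.choose ℓ.1)) :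
    ((c, ⟨ℓ, j⟩) : BIdx n) = (c, ⟨ℓ, j'⟩) ↔ j = j' := by
  constructor
  · intro h
    have h2 := (Prod.ext_iff.1 h).2
    simp only [Sigma.mk.inj_iff, heq_eq_eq] at h2
    exact h2.2
  · rintro rfl; rfl

noncomputable def Theta : MatAlg n →ₐ[ℂ] Module.End ℂ (UU n) where
  toFun := ThetaFun n
  map_one' := by
    apply LinearMap.ext
    intro u
    funext q
    obtain ⟨c, ℓ, j⟩ := q
    show ThetaFun n 1 u (c, ⟨ℓ, j⟩) = u (c, ⟨ℓ, j⟩)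
    rw [ThetaFun_apply]
    simp [Matrix.one_apply, ite_mul]
  map_mul' := fun M N => by
    apply LinearMap.ext
    intro u
    funext q
    obtain ⟨c, ℓ, j⟩ := q
    show ThetaFun n (M * N) u (c, ⟨ℓ, j⟩) = ThetaFun n M (ThetaFun n N u) (c, ⟨ℓ, j⟩)
    rw [ThetaFun_apply, ThetaFun_apply]
    simp only [Pi.mul_apply, Matrix.mul_apply, Finset.sum_mul]
    rw [Finset.sum_comm]
    apply Finset.sum_congr rfl
    intro j'' _
    rw [ThetaFun_apply, Finset.mul_sum]
    apply Finset.sum_congr rfl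
    intro j' _
    ring
  map_zero' := by
    apply LinearMap.ext
    intro u
    funext q
    obtain ⟨c, ℓ, j⟩ := q
    show ThetaFun n 0 u (c, ⟨ℓ, j⟩) = 0
    rw [ThetaFun_apply]
    simp
  map_add' := fun M N => by
    apply LinearMap.ext
    intro u
    funext q
    obtain ⟨c, ℓ, j⟩ := q
    show ThetaFun n (M + N) u (c, ⟨ℓ, j⟩)
      = ThetaFun n M u (c, ⟨ℓ, j⟩) + ThetaFun n N u (c, ⟨ℓ, j⟩)
    rw [ThetaFun_apply, ThetaFun_apply, ThetaFun_apply, ← Finset.sum_add_distrib]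
    apply Finset.sum_congr rfl
    intro j' _
    simp [add_mul]
  commutes' := fun r => by
    apply LinearMap.ext
    intro u
    funext q
    obtain ⟨c, ℓ, j⟩ := q
    show ThetaFun n (algebraMap ℂ (MatAlg n) r) u (c, ⟨ℓ, j⟩)
      = (algebraMap ℂ (Module.End ℂ (UU n)) r) u (c, ⟨ℓ, j⟩)
    rw [ThetaFun_apply, Module.algebraMap_end_apply]
    simp [Pi.algebraMap_apply, Matrix.algebraMap_matrix_apply, ite_mul]

end GlAux

namespace GlAux

open Finset Function Module

variable (n : ℕ)

def dlt (q : BIdx n) : UU n := Pi.single q 1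

lemma dlt_apply (q r : BIdx n) : dlt n q r = if r = q then 1 else 0 := by
  simp [dlt, Pi.single_apply]

lemma Ftil_dlt_false (p : Idx n) : Ftil n (dlt n (false, p)) = dlt n (true, p) := by
  funext r
  obtain ⟨c, i⟩ := r
  rw [Ftil_apply, dlt_apply]
  cases c
  · simp [dlt_apply, Prod.ext_iff]
  · simp [dlt_apply, Prod.ext_iff]

lemma Ftil_dlt_true (p : Idx n) : Ftil n (dlt n (true, p)) = 0 := by
  funext r
  obtain ⟨c, i⟩ := r
  rw [Ftil_apply]
  cases c
  · simp
  · simp [dlt_apply, Prod.ext_iff]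

lemma Etil_dlt_false (p : Idx n) : Etil n (dlt n (false, p)) = 0 := by
  funext r
  obtain ⟨c, i⟩ := r
  rw [Etil_apply]
  cases c
  · simp [dlt_apply, Prod.ext_iff]
  · simp

lemma Etil_dlt_true (p : Idx n) :
    Etil n (dlt n (true, p)) = ((n : ℂ) + 1) • dlt n (false, p) := by
  funext r
  obtain ⟨c, i⟩ := r
  rw [Etil_apply]
  cases c
  · simp [dlt_apply, Prod.ext_iff]
  · simp [dlt_apply, Prod.ext_iff]

lemma Dg_dlt (μ : BIdx n → ℂ) (q : BIdx n) : Dg n μ (dlt n q) = μ q • dlt n q := by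
  funext r
  rw [Dg_apply]
  by_cases h : r = q
  · subst h; simp
  · simp [dlt_apply, h]

lemma Theta_apply (M : MatAlg n) (u : UU n) : Theta n M u = ThetaFun n M u := rfl

lemma Etil_applyF (u : UU n) (p : Idx n) :
    Etil n u (false, p) = ((n : ℂ) + 1) * u (true, p) := by rw [Etil_apply]; simp

lemma Etil_applyT (u : UU n) (p : Idx n) : Etil n u (true, p) = 0 := by
  rw [Etil_apply]; simp

lemma Ftil_applyF (u : UU n) (p : Idx n) : Ftil n u (false, p) = 0 := by
  rw [Ftil_apply]; simp

lemma Ftil_applyT (u : UU n) (p : Idx n) : Ftil n u (true, p) = u (false, p) := by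
  rw [Ftil_apply]; simp

lemma muf_false (p : Idx n) : muf n (false, p) = (p.1.1 : ℂ) + 1 := rfl

lemma muf_true (p : Idx n) : muf n (true, p) = (p.1.1 : ℂ) := rfl

lemma Etil_comm (M : MatAlg n) : Etil n * Theta n M = Theta n M * Etil n := by
  apply LinearMap.ext
  intro u
  funext q
  obtain ⟨c, ℓ, j⟩ := q
  show Etil n (ThetaFun n M u) (c, ⟨ℓ, j⟩) = ThetaFun n M (Etil n u) (c, ⟨ℓ, j⟩)
  cases c
  · rw [Etil_applyF, ThetaFun_apply, ThetaFun_apply, Finset.mul_sum]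
    apply Finset.sum_congr rfl
    intro j' _
    rw [Etil_applyF]
    ring
  · rw [Etil_applyT, ThetaFun_apply]
    symm
    apply Finset.sum_eq_zero
    intro j' _
    rw [Etil_applyT, mul_zero]

lemma Ftil_comm (M : MatAlg n) : Ftil n * Theta n M = Theta n M * Ftil n := by
  apply LinearMap.ext
  intro u
  funext q
  obtain ⟨c, ℓ, j⟩ := q
  show Ftil n (ThetaFun n M u) (c, ⟨ℓ, j⟩) = ThetaFun n M (Ftil n u) (c, ⟨ℓ, j⟩)
  cases c
  · rw [Ftil_applyF, ThetaFun_apply]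
    symm
    apply Finset.sum_eq_zero
    intro j' _
    rw [Ftil_applyF, mul_zero]
  · rw [Ftil_applyT, ThetaFun_apply, ThetaFun_apply]
    apply Finset.sum_congr rfl
    intro j' _
    rw [Ftil_applyT]

lemma Dg_comm (μ : BIdx n → ℂ)
    (hμ : ∀ (c : Bool) (ℓ : Fin (n + 1)) (j j' : Fin (n.choose ℓ.1)),
      μ (c, ⟨ℓ, j⟩) = μ (c, ⟨ℓ, j'⟩)) (M : MatAlg n) :
    Dg n μ * Theta n M = Theta n M * Dg n μ := by
  apply LinearMap.ext
  intro u
  funext q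
  obtain ⟨c, ℓ, j⟩ := q
  show Dg n μ (ThetaFun n M u) (c, ⟨ℓ, j⟩) = ThetaFun n M (Dg n μ u) (c, ⟨ℓ, j⟩)
  rw [Dg_apply, ThetaFun_apply, ThetaFun_apply, Finset.mul_sum]
  apply Finset.sum_congr rfl
  intro j' _
  rw [Dg_apply, hμ c ℓ j j']
  ring

def Sset : Set (Module.End ℂ (UU n)) := {Etil n, Ftil n, Dg n (muf n), Dg n (nuf n)}

lemma theta_mem_centralizer (M : MatAlg n) :
    Theta n M ∈ Subalgebra.centralizer ℂ (Sset n) := by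
  rw [Subalgebra.mem_centralizer_iff]
  rintro g hg
  rcases hg with h | h | h | h
  · rw [h]; exact Etil_comm n M
  · rw [h]; exact Ftil_comm n M
  · rw [h]
    exact Dg_comm n _ (fun c ℓ j j' => by simp [muf]) M
  · rw [Set.mem_singleton_iff] at h
    rw [h]
    exact Dg_comm n _ (fun c ℓ j j' => by simp [nuf]) M

lemma centralizer_le_range :
    Subalgebra.centralizer ℂ (Sset n) ≤ (Theta n).range := by
  intro T hT
  rw [Subalgebra.mem_centralizer_iff] at hT
  have hE : Etil n * T = T * Etil n := hT _ (by left; rfl)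
  have hF : Ftil n * T = T * Ftil n := hT _ (by right; left; rfl)
  have hmu : Dg n (muf n) * T = T * Dg n (muf n) := hT _ (by right; right; left; rfl)
  have h2 : ∀ i i' : Idx n,
      T (dlt n (true, i')) (true, i) = T (dlt n (false, i')) (false, i) := by
    intro i i'
    have h := LinearMap.congr_fun hF (dlt n (false, i'))
    rw [Module.End.mul_apply, Module.End.mul_apply, Ftil_dlt_false] at h
    have h2 := congrFun h (true, i)
    rw [Ftil_applyT] at h2
    exact h2.symm
  have h3 : ∀ i i' : Idx n, T (dlt n (true, i')) (false, i) = 0 := by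
    intro i i'
    have h := LinearMap.congr_fun hF (dlt n (true, i'))
    rw [Module.End.mul_apply, Module.End.mul_apply, Ftil_dlt_true, map_zero] at h
    have h2 := congrFun h (true, i)
    rw [Ftil_applyT] at h2
    simpa using h2
  have h4 : ∀ i i' : Idx n, T (dlt n (false, i')) (true, i) = 0 := by
    intro i i'
    have h := LinearMap.congr_fun hE (dlt n (false, i'))
    rw [Module.End.mul_apply, Module.End.mul_apply, Etil_dlt_false, map_zero] at h
    have h2 := congrFun h (false, i)
    rw [Etil_applyF] at h2
    simp only [Pi.zero_apply] at h2
    have hne : ((n : ℂ) + 1) ≠ 0 := Nat.cast_add_one_ne_zero n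
    exact (mul_eq_zero.1 h2).resolve_left hne
  have h1 : ∀ p q : BIdx n, muf n p ≠ muf n q → T (dlt n q) p = 0 := by
    intro p q hne
    have h := LinearMap.congr_fun hmu (dlt n q)
    rw [Module.End.mul_apply, Module.End.mul_apply, Dg_dlt, map_smul] at h
    have h2 := congrFun h p
    rw [Dg_apply, Pi.smul_apply, smul_eq_mul] at h2
    have h3 : (muf n p - muf n q) * T (dlt n q) p = 0 := by linear_combination h2
    exact (mul_eq_zero.1 h3).resolve_left (sub_ne_zero.2 hne)
  refine ⟨fun ℓ => Matrix.of (fun j j' => T (dlt n (false, ⟨ℓ, j'⟩)) (false, ⟨ℓ, j⟩)), ?_⟩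
  apply Basis.ext (Pi.basisFun ℂ (BIdx n))
  intro q
  rw [Pi.basisFun_apply]
  have hb : (Pi.single q 1 : UU n) = dlt n q := rfl
  rw [hb]
  funext p
  obtain ⟨c, ℓ, j⟩ := p
  obtain ⟨c', ℓ', j'⟩ := q
  show ThetaFun n _ (dlt n (c', ⟨ℓ', j'⟩)) (c, ⟨ℓ, j⟩) = T (dlt n (c', ⟨ℓ', j'⟩)) (c, ⟨ℓ, j⟩)
  rw [ThetaFun_apply]
  by_cases hc : c = c'
  · subst hc
    by_cases hl : ℓ = ℓ'
    · subst hl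
      have hd : ∀ j'' : Fin (n.choose ℓ.1),
          dlt n (c, ⟨ℓ, j'⟩) (c, ⟨ℓ, j''⟩) = if j'' = j' then 1 else 0 := by
        intro j''
        rw [dlt_apply]
        by_cases h : j'' = j'
        · subst h; simp
        · rw [if_neg (fun hcon => h ((pair_eq_iff n c ℓ j'' j').1 hcon)), if_neg h]
      rw [Finset.sum_congr rfl (fun j'' _ => by rw [hd j''])]
      simp only [mul_ite, mul_one, mul_zero]
      rw [Finset.sum_ite_eq' Finset.univ j' _, if_pos (Finset.mem_univ _)]
      cases c
      · rfl
      · exact (h2 ⟨ℓ, j⟩ ⟨ℓ, j'⟩).symm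
    · have hz : ∀ j'' : Fin (n.choose ℓ.1), dlt n (c, ⟨ℓ', j'⟩) (c, ⟨ℓ, j''⟩) = 0 := by
        intro j''
        rw [dlt_apply, if_neg]
        intro hcon
        exact hl (congrArg (fun r : BIdx n => r.2.1) hcon)
      rw [Finset.sum_congr rfl (fun j'' _ => by rw [hz j'', mul_zero]), Finset.sum_const_zero]
      symm
      apply h1
      have hvl : (ℓ.1 : ℂ) ≠ (ℓ'.1 : ℂ) := by
        intro hcon
        exact hl (Fin.ext (Nat.cast_injective hcon))
      cases c
      · rw [muf_false, muf_false]
        exact fun hcon => hvl (by linear_combination hcon)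
      · rw [muf_true, muf_true]
        exact hvl
  · have hz : ∀ j'' : Fin (n.choose ℓ.1), dlt n (c', ⟨ℓ', j'⟩) (c, ⟨ℓ, j''⟩) = 0 := by
      intro j''
      rw [dlt_apply, if_neg]
      intro hcon
      exact hc (congrArg Prod.fst hcon)
    rw [Finset.sum_congr rfl (fun j'' _ => by rw [hz j'', mul_zero]), Finset.sum_const_zero]
    symm
    cases c <;> cases c'
    · exact absurd rfl hc
    · exact h3 _ _
    · exact h4 _ _
    · exact absurd rfl hc

lemma range_eq_centralizer :
    (Theta n).range = Subalgebra.centralizer ℂ (Sset n) := by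
  apply le_antisymm
  · rintro x ⟨M, rfl⟩
    exact theta_mem_centralizer n M
  · exact centralizer_le_range n

lemma Theta_inj : Function.Injective (Theta n) := by
  rw [injective_iff_map_eq_zero]
  intro M hM
  funext ℓ
  apply Matrix.ext
  intro j j'
  have h := LinearMap.congr_fun hM (dlt n (false, ⟨ℓ, j'⟩))
  have h2 := congrFun h (false, ⟨ℓ, j⟩)
  rw [show (Theta n M) (dlt n (false, ⟨ℓ, j'⟩)) (false, ⟨ℓ, j⟩)
      = ThetaFun n M (dlt n (false, ⟨ℓ, j'⟩)) (false, ⟨ℓ, j⟩) from rfl,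
    ThetaFun_apply] at h2
  have hd : ∀ j'' : Fin (n.choose ℓ.1),
      dlt n ((false : Bool), ⟨ℓ, j'⟩) ((false : Bool), ⟨ℓ, j''⟩) = if j'' = j' then 1 else 0 := by
    intro j''
    rw [dlt_apply]
    by_cases h : j'' = j'
    · subst h; simp
    · rw [if_neg (fun hcon => h ((pair_eq_iff n false ℓ j'' j').1 hcon)), if_neg h]
  rw [Finset.sum_congr rfl (fun j'' _ => by rw [hd j''])] at h2
  simp only [mul_ite, mul_one, mul_zero] at h2
  rw [Finset.sum_ite_eq' Finset.univ j' _, if_pos (Finset.mem_univ _)] at h2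
  simpa using h2

end GlAux

namespace GlAux

open Finset Function Module

variable (n : ℕ)

noncomputable def Gam : Module.End ℂ (TensorV (n + 1)) ≃ₐ[ℂ] Module.End ℂ (UU n) :=
  (Phi n).symm.conjAlgEquiv ℂ

lemma Phi_apply (u : UU n) : Phi n u = Psi n u := rfl

lemma Gam_apply (T : Module.End ℂ (TensorV (n + 1))) (u : UU n) :
    Gam n T u = (Phi n).symm (T (Phi n u)) := by
  show (Phi n).symm.conj T u = _
  rw [LinearEquiv.conj_apply_apply, LinearEquiv.symm_symm]

lemma Gam_Eop : Gam n (Eop (n + 1)) = Etil n := by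
  apply LinearMap.ext
  intro u
  rw [Gam_apply]
  have h1 : Eop (n + 1) (Phi n u) = Phi n (Etil n u) := Eop_Psi n u
  rw [h1, LinearEquiv.symm_apply_apply]

lemma Gam_Fop : Gam n (Fop (n + 1)) = Ftil n := by
  apply LinearMap.ext
  intro u
  rw [Gam_apply]
  have h1 : Fop (n + 1) (Phi n u) = Phi n (Ftil n u) := Fop_Psi n u
  rw [h1, LinearEquiv.symm_apply_apply]

lemma Gam_H1op : Gam n (H1op (n + 1)) = Dg n (muf n) := by
  apply LinearMap.ext
  intro u
  rw [Gam_apply]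
  have h1 : H1op (n + 1) (Phi n u) = Phi n (Dg n (muf n) u) := H1op_Psi n u
  rw [h1, LinearEquiv.symm_apply_apply]

lemma Gam_H2op : Gam n (H2op (n + 1)) = Dg n (nuf n) := by
  apply LinearMap.ext
  intro u
  rw [Gam_apply]
  have h1 : H2op (n + 1) (Phi n u) = Phi n (Dg n (nuf n) u) := H2op_Psi n u
  rw [h1, LinearEquiv.symm_apply_apply]

lemma centralizer_map {A B : Type*} [Ring A] [Ring B] [Algebra ℂ A] [Algebra ℂ B]
    (e : A ≃ₐ[ℂ] B) (s : Set A) :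
    (Subalgebra.centralizer ℂ s).map (e : A →ₐ[ℂ] B) = Subalgebra.centralizer ℂ (⇑e '' s) := by
  ext x
  simp only [Subalgebra.mem_map, Subalgebra.mem_centralizer_iff]
  constructor
  · rintro ⟨y, hy, rfl⟩ g hg
    obtain ⟨a, ha, rfl⟩ := hg
    show e a * e y = e y * e a
    rw [← map_mul, ← map_mul, hy a ha]
  · intro hx
    refine ⟨e.symm x, fun a ha => ?_, e.apply_symm_apply x⟩
    apply e.injective
    rw [map_mul, map_mul, e.apply_symm_apply]
    exact hx (e a) ⟨a, ha, rfl⟩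

lemma map_glCentralizer :
    (glCentralizer n).map ((Gam n : Module.End ℂ (TensorV (n + 1)) →ₐ[ℂ] Module.End ℂ (UU n)))
      = Subalgebra.centralizer ℂ (Sset n) := by
  rw [glCentralizer, centralizer_map]
  congr 1
  rw [Set.image_insert_eq, Set.image_insert_eq, Set.image_insert_eq, Set.image_singleton]
  rw [Gam_Eop, Gam_Fop, Gam_H1op, Gam_H2op]
  rfl

noncomputable def finalIso : glCentralizer n ≃ₐ[ℂ] MatAlg n :=
  ((Gam n).subalgebraMap (glCentralizer n)).trans
    ((Subalgebra.equivOfEq _ _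
      (by rw [map_glCentralizer n, range_eq_centralizer n] :
        (glCentralizer n).map _ = (Theta n).range)).trans
      (AlgEquiv.ofInjective (Theta n) (Theta_inj n)).symm)

lemma finrank_MatAlg : finrank ℂ (MatAlg n) = ∑ ℓ : Fin (n + 1), n.choose ℓ.1 * n.choose ℓ.1 := by
  rw [Module.finrank_pi_fintype ℂ]
  apply Finset.sum_congr rfl
  intro ℓ _
  rw [Module.finrank_matrix]
  simp

lemma sum_choose_sq :
    ∑ ℓ : Fin (n + 1), n.choose ℓ.1 * n.choose ℓ.1 = (2 * n).choose n := by
  rw [two_mul, Nat.add_choose_eq, Finset.Nat.sum_antidiagonal_eq_sum_range_succ_mk,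
    Fin.sum_univ_eq_sum_range (fun ℓ => n.choose ℓ * n.choose ℓ) (n + 1)]
  apply Finset.sum_congr rfl
  intro i hi
  rw [Nat.choose_symm (Nat.lt_succ_iff.1 (Finset.mem_range.1 hi))]

end GlAux


set_option synthInstance.maxHeartbeats 1000000 in
set_option maxHeartbeats 1000000 in
/-- `End_{gl(1|1)}(V^{⊗k})` (`k = n+1`) has dimension `(2(k-1) choose k-1)` and is
isomorphic as a `ℂ`-algebra to the planar rook algebra `ℂP_{k-1}`, i.e., to the
direct sum over `ℓ = 0,…,k-1` of full matrix algebras of size `(k-1 choose ℓ)`. -/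
theorem glCentralizer_eq_planar_rook_algebra (n : ℕ) :
    Module.finrank ℂ (glCentralizer n) = (2 * n).choose n ∧
    Nonempty ((glCentralizer n) ≃ₐ[ℂ]
      ((ℓ : Fin (n + 1)) → Matrix (Fin (n.choose ℓ.val)) (Fin (n.choose ℓ.val)) ℂ)) := by
  constructor
  · have h2 : Module.finrank ℂ (GlAux.MatAlg n) = (2 * n).choose n := by
      rw [GlAux.finrank_MatAlg, GlAux.sum_choose_sq]
    have h1 : Module.finrank ℂ (glCentralizer n) = Module.finrank ℂ (GlAux.MatAlg n) :=
      LinearEquiv.finrank_eq (GlAux.finalIso n).toLinearEquiv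
    exact h1.trans h2
  · exact ⟨GlAux.finalIso n⟩
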